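/- Covering-number bound for the induced Bellman-loss function class: fix h∈[H] and a reward function r with values in [−R_max,R_max]. For z=(s,a,ρ,s')∈S×A×[−R_max,R_max]×S, f,f'∈F, and a policy π, define g^π_{f,f'}(z) = (f_h(s,a) − ρ − f'_{h+1}(s',π_{h+1}))² − ((T^π_{h,r}f'_{h+1})(s,a) − ρ − f'_{h+1}(s',π_{h+1}))². Then for every ε,β>0, the sup-norm covering number at scale εβ/5 of the class G_{F,Π} = {g^π_{f,f'} : f,f'∈F, π∈Π} satisfies N∞(εβ/5, G_{F,Π}) ≤ (N∞(εβ/(140·H·R_max), F))² · N∞,1(εβ/(140·H²·R_max²), Π). -/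

import Mathlib

open scoped BigOperators Classical

noncomputable section

namespace VCGRL

variable {S A : Type*}

/-- Time-indexed stochastic policy: `π h s a` is the probability of action `a`
in state `s` at step `h`. -/
abbrev Pol (S A : Type*) := ℕ → S → A → ℝ

/-- Time-indexed transition kernel. -/
abbrev Ker (S A : Type*) := ℕ → S → A → S → ℝ

/-- Time-indexed reward function. -/
abbrev Rew (S A : Type*) := ℕ → S → A → ℝ

section Defs

variable [Fintype S] [Fintype A]

def IsPolicy (π : Pol S A) : Prop :=
  (∀ h s a, 0 ≤ π h s a) ∧ ∀ h s, ∑ a, π h s a = 1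

def IsKernel (P : Ker S A) : Prop :=
  (∀ h s a s', 0 ≤ P h s a s') ∧ ∀ h s a, ∑ s', P h s a s' = 1

/-- `g(s, π_h) = E_{a ∼ π_h(·|s)}[g(s,a)]`. -/
def expA (π : Pol S A) (h : ℕ) (g : S → A → ℝ) (s : S) : ℝ := ∑ a, π h s a * g s a

/-- Q-value with `m` steps remaining, starting at step `h`. -/
def Qaux (P : Ker S A) (π : Pol S A) (r : Rew S A) : ℕ → ℕ → S → A → ℝ
  | 0, _, _, _ => 0
  | m + 1, h, s, a =>
      r h s a + ∑ s', P h s a s' * expA π (h + 1) (Qaux P π r m (h + 1)) s'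

/-- `Q_h^π(·,·;r)` for an episodic MDP of horizon `H`. -/
def Qfun (P : Ker S A) (π : Pol S A) (r : Rew S A) (H h : ℕ) : S → A → ℝ :=
  Qaux P π r (H + 1 - h) h

/-- State value `V_h^π(·;r)`. -/
def Vfun (P : Ker S A) (π : Pol S A) (r : Rew S A) (H h : ℕ) (s : S) : ℝ :=
  expA π h (Qfun P π r H h) s

/-- `V₁^π(s₀;r)`. -/
def V1 (P : Ker S A) (π : Pol S A) (r : Rew S A) (H : ℕ) (s₀ : S) : ℝ :=
  Vfun P π r H 1 s₀

/-- `V₁*(s₀;r) = max_π V₁^π(s₀;r)`. -/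
def Vstar (P : Ker S A) (r : Rew S A) (H : ℕ) (s₀ : S) : ℝ :=
  ⨆ π : {π : Pol S A // IsPolicy π}, V1 P π.1 r H s₀

/-- Policy-specific Bellman evaluation operator `T^π_{h,r}`. -/
def bellman (P : Ker S A) (π : Pol S A) (r : Rew S A) (h : ℕ) (g : S → A → ℝ) :
    S → A → ℝ :=
  fun s a => r h s a + ∑ s', P h s a s' * expA π (h + 1) g s'

/-- State distribution at step `m + 1` when following `π` from `s₀`. -/
def visit (P : Ker S A) (π : Pol S A) (s₀ : S) : ℕ → S → ℝ
  | 0 => fun s => if s = s₀ then 1 else 0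
  | m + 1 => fun s' => ∑ s, ∑ a, visit P π s₀ m s * π (m + 1) s a * P (m + 1) s a s'

/-- `E_{d_π,h}[u(s,a)²]`: expected squared value of `u` under the state-action
visitation measure of `π` at step `h`. -/
def occSq (P : Ker S A) (π : Pol S A) (s₀ : S) (h : ℕ) (u : S → A → ℝ) : ℝ :=
  ∑ s, ∑ a, visit P π s₀ (h - 1) s * π h s a * u s a ^ 2

/-- `E_{μ_h}[‖u‖²]`: expected squared value of `u` under the data distribution `μ_h`. -/
def popSq (μ : ℕ → S × A × S → ℝ) (h : ℕ) (u : S → A → ℝ) : ℝ :=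
  ∑ x : S × A × S, μ h x * u x.1 x.2.1 ^ 2

def IsDataDist (μ : ℕ → S × A × S → ℝ) : Prop :=
  (∀ h x, 0 ≤ μ h x) ∧ ∀ h, ∑ x : S × A × S, μ h x = 1

/-- Membership in the function class `F = F₁ × F₂ × ⋯`. -/
def InClass (Fc : ℕ → Set (S → A → ℝ)) (f : ℕ → S → A → ℝ) : Prop := ∀ h, f h ∈ Fc h

/-- Boundedness of the function class: `F_h ⊆ S×A → [-(H-h+1)R, (H-h+1)R]` and
`F_{H+1} = {0}`. -/
def ClassBounded (H : ℕ) (Rmax : ℝ) (Fc : ℕ → Set (S → A → ℝ)) : Prop :=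
  (∀ h ∈ Finset.Icc 1 H, ∀ f ∈ Fc h, ∀ s a, |f s a| ≤ ((H : ℝ) - h + 1) * Rmax) ∧
    Fc (H + 1) = {fun _ _ => 0}

/-- Distribution-shift coefficient `C^π(π')` (from the visitation measure of `π'`
to the data distribution `μ`, with Bellman operators induced by `π`). -/
def distShift (P : Ker S A) (μ : ℕ → S × A × S → ℝ) (Fc : ℕ → Set (S → A → ℝ))
    (Rset : Set (Rew S A)) (H : ℕ) (s₀ : S) (π π' : Pol S A) : ℝ :=
  ⨆ f1 : {f : ℕ → S → A → ℝ // InClass Fc f},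
    ⨆ f2 : {f : ℕ → S → A → ℝ // InClass Fc f},
      ⨆ h ∈ Finset.Icc 1 H, ⨆ r : Rset,
        occSq P π' s₀ h (fun s a => f1.1 h s a - bellman P π r.1 h (f2.1 (h + 1)) s a) /
          popSq μ h (fun s a => f1.1 h s a - bellman P π r.1 h (f2.1 (h + 1)) s a)

end Defs

/-- An offline dataset of `K` transitions for each of the `H` steps. -/
abbrev Dataset (S A : Type*) (H K : ℕ) := Fin H → Fin K → S × A × S

section Data

variable [Fintype S] [Fintype A] [Nonempty S] [Nonempty A]

/-- Access the data of (1-based) step `h`. -/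
def dget {H K : ℕ} (D : Dataset S A H K) (h : ℕ) (τ : Fin K) : S × A × S :=
  if hh : h - 1 < H then D ⟨h - 1, hh⟩ τ else Classical.arbitrary _

/-- Empirical squared loss `L_{h,r}(u, f', π; D)`. -/
def empLoss {H K : ℕ} (r : Rew S A) (D : Dataset S A H K) (h : ℕ)
    (u f' : S → A → ℝ) (π : Pol S A) : ℝ :=
  (K : ℝ)⁻¹ * ∑ τ : Fin K,
    (u (dget D h τ).1 (dget D h τ).2.1 - r h (dget D h τ).1 (dget D h τ).2.1 -
      expA π (h + 1) f' (dget D h τ).2.2) ^ 2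

/-- Empirical Bellman error estimate `E_{h,r}(f, π; D)`. -/
def empBE {H K : ℕ} (Fc : ℕ → Set (S → A → ℝ)) (r : Rew S A) (D : Dataset S A H K)
    (h : ℕ) (f : ℕ → S → A → ℝ) (π : Pol S A) : ℝ :=
  empLoss r D h (f h) (f (h + 1)) π - ⨅ g ∈ Fc h, empLoss r D h g (f (h + 1)) π

/-- Probability of a set of datasets when, for each step `h`, the `K` transitions are
drawn i.i.d. from `μ_h`. -/
def dsProb {H K : ℕ} (μ : ℕ → S × A × S → ℝ) (E : Set (Dataset S A H K)) : ℝ :=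
  ∑ D : Dataset S A H K,
    if D ∈ E then ∏ h : Fin H, ∏ τ : Fin K, μ (h.1 + 1) (D h τ) else 0

/-- The good event `G(Π)`. -/
def goodEvent (H K : ℕ) (P : Ker S A) (μ : ℕ → S × A × S → ℝ)
    (Fc : ℕ → Set (S → A → ℝ)) (Rset : Set (Rew S A)) (PiC : Set (Pol S A))
    (εS : ℝ) : Set (Dataset S A H K) :=
  {D | ∀ h ∈ Finset.Icc 1 H, ∀ r ∈ Rset, ∀ π ∈ PiC, ∀ f f' : ℕ → S → A → ℝ,
    InClass Fc f → InClass Fc f' →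
    |popSq μ h (fun s a => f h s a - bellman P π r h (f' (h + 1)) s a) -
        empLoss r D h (f h) (f' (h + 1)) π +
        empLoss r D h (bellman P π r h (f' (h + 1))) (f' (h + 1)) π| ≤
      εS + 1 / 2 * popSq μ h fun s a => f h s a - bellman P π r h (f' (h + 1)) s a}

/-- Pessimistic regularized policy-evaluation objective. -/
def pessObj {H K : ℕ} (Fc : ℕ → Set (S → A → ℝ)) (r : Rew S A) (D : Dataset S A H K)
    (π : Pol S A) (lam : ℝ) (s₀ : S) (f : ℕ → S → A → ℝ) : ℝ :=
  expA π 1 (f 1) s₀ + lam * ∑ h ∈ Finset.Icc 1 H, empBE Fc r D h f π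

/-- Optimistic regularized policy-evaluation objective. -/
def optObj {H K : ℕ} (Fc : ℕ → Set (S → A → ℝ)) (r : Rew S A) (D : Dataset S A H K)
    (π : Pol S A) (lam : ℝ) (s₀ : S) (f : ℕ → S → A → ℝ) : ℝ :=
  -expA π 1 (f 1) s₀ + lam * ∑ h ∈ Finset.Icc 1 H, empBE Fc r D h f π

/-- `Q` is a pessimistic policy-evaluation output (minimizer of the pessimistic
objective over the function class). -/
def IsPessEval {H K : ℕ} (Fc : ℕ → Set (S → A → ℝ)) (r : Rew S A) (D : Dataset S A H K)
    (π : Pol S A) (lam : ℝ) (s₀ : S) (Q : ℕ → S → A → ℝ) : Prop :=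
  InClass Fc Q ∧ ∀ f, InClass Fc f → pessObj Fc r D π lam s₀ Q ≤ pessObj Fc r D π lam s₀ f

/-- `Q` is an optimistic policy-evaluation output. -/
def IsOptEval {H K : ℕ} (Fc : ℕ → Set (S → A → ℝ)) (r : Rew S A) (D : Dataset S A H K)
    (π : Pol S A) (lam : ℝ) (s₀ : S) (Q : ℕ → S → A → ℝ) : Prop :=
  InClass Fc Q ∧ ∀ f, InClass Fc f → optObj Fc r D π lam s₀ Q ≤ optObj Fc r D π lam s₀ f

/-- Pessimistic soft policy iteration: iterates `πt` and value estimates `Qt`. -/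
def IsSPIPess {H K : ℕ} (Fc : ℕ → Set (S → A → ℝ)) (r : Rew S A) (D : Dataset S A H K)
    (T : ℕ) (η lam : ℝ) (s₀ : S) (πt : ℕ → Pol S A) (Qt : ℕ → ℕ → S → A → ℝ) : Prop :=
  (∀ h s a, πt 1 h s a = (Fintype.card A : ℝ)⁻¹) ∧
  (∀ t ∈ Finset.Icc 1 T, IsPessEval Fc r D (πt t) lam s₀ (Qt t)) ∧
  ∀ t ∈ Finset.Icc 1 T, ∀ h s a,
    πt (t + 1) h s a =
      πt t h s a * Real.exp (η * Qt t h s a) /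
        ∑ a', πt t h s a' * Real.exp (η * Qt t h s a')

/-- Optimistic soft policy iteration. -/
def IsSPIOpt {H K : ℕ} (Fc : ℕ → Set (S → A → ℝ)) (r : Rew S A) (D : Dataset S A H K)
    (T : ℕ) (η lam : ℝ) (s₀ : S) (πt : ℕ → Pol S A) (Qt : ℕ → ℕ → S → A → ℝ) : Prop :=
  (∀ h s a, πt 1 h s a = (Fintype.card A : ℝ)⁻¹) ∧
  (∀ t ∈ Finset.Icc 1 T, IsOptEval Fc r D (πt t) lam s₀ (Qt t)) ∧
  ∀ t ∈ Finset.Icc 1 T, ∀ h s a,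
    πt (t + 1) h s a =
      πt t h s a * Real.exp (η * Qt t h s a) /
        ∑ a', πt t h s a' * Real.exp (η * Qt t h s a')

end Data

section Mix

variable [Fintype S] [Fintype A]

/-- The uniform mixture of the policies `πt 1, …, πt T` (as a Markov policy). -/
def mixPol (T : ℕ) (πt : ℕ → Pol S A) : Pol S A :=
  fun h s a => (T : ℝ)⁻¹ * ∑ t ∈ Finset.Icc 1 T, πt t h s a

/-- The value of the uniform mixture of the policies `πt 1, …, πt T`. -/
def mixV1 (P : Ker S A) (T : ℕ) (πt : ℕ → Pol S A) (r : Rew S A) (H : ℕ) (s₀ : S) : ℝ :=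
  (T : ℝ)⁻¹ * ∑ t ∈ Finset.Icc 1 T, V1 P (πt t) r H s₀

/-- Total reward `R = r₀ + ∑ᵢ rᵢ`. -/
def totalRew {n : ℕ} (r0 : Rew S A) (ra : Fin n → Rew S A) : Rew S A :=
  fun h s a => r0 h s a + ∑ i, ra i h s a

/-- Reward excluding agent `i` : `R₋ᵢ = r₀ + ∑_{j ≠ i} rⱼ`. -/
def negRew {n : ℕ} (r0 : Rew S A) (ra : Fin n → Rew S A) (i : Fin n) : Rew S A :=
  fun h s a => r0 h s a + ∑ j ∈ Finset.univ.erase i, ra j h s a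

/-- The set of reward functions of interest, `{R₋ᵢ}ᵢ ∪ {R}`. -/
def RewSet {n : ℕ} (r0 : Rew S A) (ra : Fin n → Rew S A) : Set (Rew S A) :=
  Set.range (negRew r0 ra) ∪ {totalRew r0 ra}

/-- Range condition on an agent's reward. -/
def AgentRewRange (H : ℕ) (r : Rew S A) : Prop :=
  ∀ h ∈ Finset.Icc 1 H, ∀ s a, 0 ≤ r h s a ∧ r h s a ≤ 1

/-- Range condition on the seller's reward. -/
def SellerRewRange (H n : ℕ) (Rmax : ℝ) (r : Rew S A) : Prop :=
  ∀ h ∈ Finset.Icc 1 H, ∀ s a, -Rmax ≤ r h s a ∧ r h s a ≤ -(n : ℝ) + Rmax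

end Mix

section Cover

variable [Fintype S] [Fintype A]

/-- ℓ∞ covering number of the function class `F`. -/
def coverF (H : ℕ) (Fc : ℕ → Set (S → A → ℝ)) (ε : ℝ) : ℕ :=
  sInf {N : ℕ | ∃ C : Finset (ℕ → S → A → ℝ), C.card = N ∧
    ∀ f : ℕ → S → A → ℝ, InClass Fc f →
      ∃ g ∈ C, ∀ h ∈ Finset.Icc 1 H, ∀ s a, |g h s a - f h s a| ≤ ε}

/-- ℓ∞,1 covering number of a policy class. -/
def coverPol (H : ℕ) (PiC : Set (Pol S A)) (ε : ℝ) : ℕ :=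
  sInf {N : ℕ | ∃ C : Finset (Pol S A), C.card = N ∧
    ∀ π ∈ PiC, ∃ π' ∈ C, ∀ h ∈ Finset.Icc 1 H, ∀ s, ∑ a, |π h s a - π' h s a| ≤ ε}

/-- The statistical error parameter `ε_S`. -/
def epsS (H K n : ℕ) (Rmax δ : ℝ) (Fc : ℕ → Set (S → A → ℝ)) (PiC : Set (Pol S A)) : ℝ :=
  5136 / K * (H : ℝ) ^ 4 * Rmax ^ 4 *
    Real.log (56 * n * H * coverF H Fc (19 * (H : ℝ) ^ 3 * Rmax ^ 3 / K) *
      coverPol H PiC (19 * (H : ℝ) ^ 4 * Rmax ^ 4 / K) / δ)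

end Cover

/-- The recurring error quantity
`Λ = 2(HR)^{1/3}(ε_S+3ε_F)^{1/3} + √(8ε_S + 12ε_F + 3ε_{F,F})`. -/
def Lam (H : ℕ) (Rmax εS εF εFF : ℝ) : ℝ :=
  2 * ((H : ℝ) * Rmax) ^ ((1 : ℝ) / 3) * (εS + 3 * εF) ^ ((1 : ℝ) / 3) +
    Real.sqrt (8 * εS + 12 * εF + 3 * εFF)

/-- The regularization coefficient `λ = (R / (H²(ε_S+3ε_F)²))^{1/3}`. -/
def lamReg (H : ℕ) (Rmax εS εF : ℝ) : ℝ :=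
  (Rmax / ((H : ℝ) ^ 2 * (εS + 3 * εF) ^ 2)) ^ ((1 : ℝ) / 3)

/-- The learning rate `η = √(log|A| / (2H²R²T))`. -/
def etaReg (H T : ℕ) (Rmax : ℝ) (cardA : ℕ) : ℝ :=
  Real.sqrt (Real.log (cardA : ℝ) / (2 * (H : ℝ) ^ 2 * Rmax ^ 2 * (T : ℝ)))

section Assump

variable [Fintype S] [Fintype A]

/-- `f` is a realizability witness for `Q^π(·,·;r)` at accuracy `ε_F`. -/
def RealizWitness (P : Ker S A) (r : Rew S A) (H : ℕ) (s₀ : S) (εF : ℝ)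
    (π : Pol S A) (f : ℕ → S → A → ℝ) : Prop :=
  ∀ h ∈ Finset.Icc 1 H, ∀ π' : Pol S A, IsPolicy π' →
    occSq P π' s₀ h (fun s a => f h s a - Qfun P π r H h s a) ≤ εF

/-- Assumption: approximate realizability with parameter `ε_F`. -/
def Realizable (P : Ker S A) (Fc : ℕ → Set (S → A → ℝ)) (Rset : Set (Rew S A))
    (H : ℕ) (s₀ : S) (εF : ℝ) : Prop :=
  ∀ r ∈ Rset, ∀ π : Pol S A, IsPolicy π →
    ∃ f, InClass Fc f ∧ RealizWitness P r H s₀ εF π f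

/-- Assumption: approximate completeness with parameter `ε_{F,F}`. -/
def Complete (P : Ker S A) (μ : ℕ → S × A × S → ℝ) (Fc : ℕ → Set (S → A → ℝ))
    (Rset : Set (Rew S A)) (H : ℕ) (εFF : ℝ) : Prop :=
  ∀ h ∈ Finset.Icc 1 H, ∀ r ∈ Rset, ∀ π : Pol S A, IsPolicy π →
    ∀ f' ∈ Fc (h + 1),
      (⨅ g ∈ Fc h, popSq μ h fun s a => g s a - bellman P π r h f' s a) ≤ εFF

end Assump

section Path

variable [Fintype S] [Fintype A]

/-- Distribution over state-action pairs at step `h + m` when following `π` after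
taking action `a` in state `s` at step `h`. -/
def pathDist (P : Ker S A) (π : Pol S A) (h : ℕ) (s : S) (a : A) : ℕ → S → A → ℝ
  | 0 => fun s' a' => if s' = s ∧ a' = a then 1 else 0
  | m + 1 => fun s'' a'' =>
      ∑ s', ∑ a',
        pathDist P π h s a m s' a' * P (h + m) s' a' s'' * π (h + m + 1) s'' a''

end Path

section Loss

variable [Fintype S] [Fintype A]

/-- Sup-norm covering number of a class of real functions, restricted to inputs
satisfying `Ok`. -/
def coverG {Z : Type*} (G : Set (Z → ℝ)) (Ok : Z → Prop) (ε : ℝ) : ℕ :=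
  sInf {N : ℕ | ∃ C : Finset (Z → ℝ), C.card = N ∧
    ∀ g ∈ G, ∃ g' ∈ C, ∀ z, Ok z → |g z - g' z| ≤ ε}

/-- The induced Bellman-loss function `g^π_{f,f'}` on `z = (s, a, ρ, s')`. -/
def lossFun (P : Ker S A) (r : Rew S A) (h : ℕ) (f f' : ℕ → S → A → ℝ)
    (π : Pol S A) : S × A × ℝ × S → ℝ :=
  fun z =>
    (f h z.1 z.2.1 - z.2.2.1 - expA π (h + 1) (f' (h + 1)) z.2.2.2) ^ 2 -
      (bellman P π r h (f' (h + 1)) z.1 z.2.1 - z.2.2.1 -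
        expA π (h + 1) (f' (h + 1)) z.2.2.2) ^ 2

/-- The induced Bellman-loss function class `G_{F,Π}`. -/
def lossClass (P : Ker S A) (r : Rew S A) (h : ℕ) (Fc : ℕ → Set (S → A → ℝ))
    (PiC : Set (Pol S A)) : Set (S × A × ℝ × S → ℝ) :=
  {g | ∃ f f' : ℕ → S → A → ℝ, ∃ π ∈ PiC, InClass Fc f ∧ InClass Fc f' ∧
    g = lossFun P r h f f' π}

end Loss

end VCGRL



section Aux

lemma aux_wabs {ι : Type*} (t : Finset ι) (p q : ι → ℝ) (c : ℝ)
    (hq : ∀ i ∈ t, |q i| ≤ c) : |∑ i ∈ t, p i * q i| ≤ c * ∑ i ∈ t, |p i| := by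
  calc |∑ i ∈ t, p i * q i| ≤ ∑ i ∈ t, |p i * q i| := Finset.abs_sum_le_sum_abs _ _
    _ = ∑ i ∈ t, |p i| * |q i| := by simp [abs_mul]
    _ ≤ ∑ i ∈ t, |p i| * c := Finset.sum_le_sum fun i hi =>
        mul_le_mul_of_nonneg_left (hq i hi) (abs_nonneg _)
    _ = c * ∑ i ∈ t, |p i| := by rw [← Finset.sum_mul]; ring

lemma aux_clamp_close (lo hi x y : ℝ) (h1 : lo ≤ x) (h2 : x ≤ hi) :
    |max lo (min hi y) - x| ≤ |y - x| := by
  have hub := le_abs_self (y - x)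
  have hlb := neg_abs_le (y - x)
  rw [abs_le]
  constructor
  · rcases le_total y hi with hyh | hyh
    · have : min hi y = y := min_eq_right hyh
      have h3 : y ≤ max lo (min hi y) := by rw [this]; exact le_max_right _ _
      linarith
    · have : min hi y = hi := min_eq_left hyh
      have h3 : hi ≤ max lo (min hi y) := by rw [this]; exact le_max_right _ _
      linarith
  · rcases le_total lo y with hly | hly
    · have h3 : max lo (min hi y) ≤ max lo y := max_le_max le_rfl (min_le_right _ _)
      have : max lo y = y := max_eq_right hly
      rw [this] at h3; linarith
    · have h3 : max lo (min hi y) ≤ max lo lo :=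
        max_le_max le_rfl (le_trans (min_le_right _ _) hly)
      simp only [max_self] at h3
      linarith

lemma aux_grid {S A : Type*} [Fintype S] [Fintype A] (H : ℕ) (ε M : ℝ) (hε : 0 < ε) :
    ∃ C : Finset (ℕ → S → A → ℝ), ∀ f : ℕ → S → A → ℝ,
      (∀ k ∈ Finset.Icc 1 H, ∀ s a, |f k s a| ≤ M) →
      ∃ g ∈ C, ∀ k ∈ Finset.Icc 1 H, ∀ s a, |g k s a - f k s a| ≤ ε := by
  classical
  set m : ℤ := ⌈M / ε⌉ with hm
  set I : Finset ℤ := Finset.Icc (-m) m with hI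
  refine ⟨Finset.image
      (fun v : (Finset.Icc 1 H : Finset ℕ) → S → A → {i // i ∈ I} =>
        fun k s a => if hk : k ∈ Finset.Icc 1 H then ε * ((v ⟨k, hk⟩ s a : ℤ) : ℝ) else 0)
      Finset.univ, ?_⟩
  intro f hf
  have hmem : ∀ k, k ∈ Finset.Icc 1 H → ∀ s a, ⌈f k s a / ε⌉ ∈ I := by
    intro k hk s a
    have hb := hf k hk s a
    rw [abs_le] at hb
    have h1 : f k s a / ε ≤ M / ε := by gcongr; exact hb.2
    have h2 : -(M / ε) ≤ f k s a / ε := by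
      rw [neg_le, ← neg_div]; gcongr; linarith [hb.1]
    rw [hI, Finset.mem_Icc]
    constructor
    · have : (-m : ℝ) ≤ (⌈f k s a / ε⌉ : ℝ) := by
        calc (-m : ℝ) ≤ -(M / ε) := by
              rw [neg_le_neg_iff]; exact Int.le_ceil _
          _ ≤ f k s a / ε := h2
          _ ≤ ⌈f k s a / ε⌉ := Int.le_ceil _
      exact_mod_cast this
    · exact Int.ceil_le_ceil h1
  refine ⟨_, Finset.mem_image_of_mem _ (Finset.mem_univ
    (fun (k : (Finset.Icc 1 H : Finset ℕ)) (s : S) (a : A) =>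
      (⟨⌈f (k : ℕ) s a / ε⌉, hmem (k : ℕ) k.2 s a⟩ : {i // i ∈ I}))), ?_⟩
  intro k hk s a
  rw [dif_pos hk]
  have hle := Int.le_ceil (f k s a / ε)
  have hlt := Int.ceil_lt_add_one (f k s a / ε)
  have hxy : ε * (f k s a / ε) = f k s a := by field_simp
  have m1 : ε * (f k s a / ε) ≤ ε * (⌈f k s a / ε⌉ : ℝ) :=
    mul_le_mul_of_nonneg_left hle hε.le
  have m2 : ε * (⌈f k s a / ε⌉ : ℝ) < ε * (f k s a / ε + 1) :=
    mul_lt_mul_of_pos_left hlt hε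
  rw [abs_le]
  constructor <;> nlinarith

lemma aux_alg (M w e1 HR Aa Aa' Bb Bb' φ ψ ζ : ℝ)
    (hA : |Aa| ≤ 2*M) (hA' : |Aa'| ≤ 2*M + w) (hB : |Bb| ≤ 2*M) (hB' : |Bb'| ≤ 2*M + 2*w)
    (hBA : |Bb - Aa| ≤ 2*M) (hBA' : |Bb' - Aa'| ≤ 2*M + w)
    (hd1 : Aa - Aa' = φ - ζ) (hd2 : Bb - Bb' = ψ - ζ)
    (hφ : |φ| ≤ e1) (hψ : |ψ| ≤ e1 + w) (hζ : |ζ| ≤ e1 + w)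
    (hM : M ≤ HR) (hMpos : 0 ≤ M) (hw0 : 0 ≤ w) (hwe : w ≤ e1) (he1 : e1 ≤ HR) :
    |Aa^2 - Bb^2 - (Aa'^2 - Bb'^2)| ≤ 28 * HR * e1 := by
  have he1n : 0 ≤ e1 := le_trans hw0 hwe
  have key : Aa^2 - Bb^2 - (Aa'^2 - Bb'^2) =
      φ*(Aa+Aa') - ψ*(Bb+Bb') + ζ*((Bb-Aa) + (Bb'-Aa')) := by
    linear_combination (Aa+Aa') * hd1 - (Bb+Bb') * hd2
  have n1 : |Aa + Aa'| ≤ 4*M + w := (abs_add_le _ _).trans (by linarith)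
  have n2 : |Bb + Bb'| ≤ 4*M + 2*w := (abs_add_le _ _).trans (by linarith)
  have n3 : |(Bb - Aa) + (Bb' - Aa')| ≤ 4*M + w := (abs_add_le _ _).trans (by linarith)
  have t1 : |φ * (Aa+Aa')| ≤ e1 * (4*M + w) := by
    rw [abs_mul]; exact mul_le_mul hφ n1 (abs_nonneg _) he1n
  have t2 : |ψ * (Bb+Bb')| ≤ (e1 + w) * (4*M + 2*w) := by
    rw [abs_mul]; exact mul_le_mul hψ n2 (abs_nonneg _) (by linarith)
  have t3 : |ζ * ((Bb-Aa) + (Bb'-Aa'))| ≤ (e1 + w) * (4*M + w) := by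
    rw [abs_mul]; exact mul_le_mul hζ n3 (abs_nonneg _) (by linarith)
  have tri : |Aa^2 - Bb^2 - (Aa'^2 - Bb'^2)| ≤
      |φ * (Aa+Aa')| + |ψ * (Bb+Bb')| + |ζ * ((Bb-Aa) + (Bb'-Aa'))| := by
    rw [key]
    have u1 : |φ * (Aa+Aa') - ψ * (Bb+Bb') + ζ * ((Bb-Aa) + (Bb'-Aa'))| ≤
        |φ * (Aa+Aa') - ψ * (Bb+Bb')| + |ζ * ((Bb-Aa) + (Bb'-Aa'))| := abs_add_le _ _
    have u2 : |φ * (Aa+Aa') - ψ * (Bb+Bb')| ≤ |φ * (Aa+Aa')| + |ψ * (Bb+Bb')| :=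
      abs_sub _ _
    linarith
  have hHR : 0 ≤ HR := le_trans hMpos hM
  nlinarith [mul_nonneg (sub_nonneg.mpr hM) he1n, mul_nonneg (sub_nonneg.mpr hM) hw0,
    mul_nonneg (sub_nonneg.mpr hwe) hw0, mul_nonneg (sub_nonneg.mpr hwe) hHR,
    mul_nonneg (sub_nonneg.mpr he1) he1n, mul_nonneg (sub_nonneg.mpr he1) hw0]

end Aux

section Stmt19Aux

lemma aux_clamp_close' (lo hi x y : ℝ) (h1 : lo ≤ x) (h2 : x ≤ hi) :
    |x - max lo (min hi y)| ≤ |x - y| := by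
  rw [abs_sub_comm, abs_sub_comm x y]
  exact aux_clamp_close lo hi x y h1 h2

open VCGRL in
lemma expA_def' {S A : Type*} [Fintype S] [Fintype A] (π : Pol S A) (k : ℕ)
    (g : S → A → ℝ) (s : S) : expA π k g s = ∑ a, π k s a * g s a := rfl

open VCGRL in
lemma bellman_def' {S A : Type*} [Fintype S] [Fintype A] (P : Ker S A) (π : Pol S A)
    (r : Rew S A) (k : ℕ) (g : S → A → ℝ) (s : S) (a : A) :
    bellman P π r k g s a = r k s a + ∑ s', P k s a s' * expA π (k + 1) g s' := rfl

end Stmt19Aux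



set_option maxHeartbeats 2000000 in
open VCGRL in
/-- **Statement 19: covering-number bound for the induced Bellman-loss function
class `G_{F,Π}`.** -/
theorem stmt19
    {S A : Type*} [Fintype S] [Fintype A] [Nonempty S] [Nonempty A]
    (H : ℕ) (Rmax : ℝ) (hRmax : 0 < Rmax) (hH : 1 ≤ H)
    (P : Ker S A) (hP : IsKernel P)
    (Fc : ℕ → Set (S → A → ℝ)) (hFc : ClassBounded H Rmax Fc)
    (PiC : Set (Pol S A)) (hPiC : ∀ π ∈ PiC, IsPolicy π)
    (h : ℕ) (hh : h ∈ Finset.Icc 1 H)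
    (r : Rew S A) (hr : ∀ h' ∈ Finset.Icc 1 H, ∀ s a, |r h' s a| ≤ Rmax)
    (ε β : ℝ) (hε : 0 < ε) (hβ : 0 < β) :
    coverG (lossClass P r h Fc PiC) (fun z => |z.2.2.1| ≤ Rmax) (ε * β / 5) ≤
      (coverF H Fc (ε * β / (140 * H * Rmax))) ^ 2 *
        coverPol H PiC (ε * β / (140 * (H : ℝ) ^ 2 * Rmax ^ 2)) := by
  classical
  obtain ⟨h1h, hhH⟩ := Finset.mem_Icc.mp hh
  have hHpos : (0:ℝ) < (H:ℝ) := by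
    have h0 : 0 < H := lt_of_lt_of_le Nat.zero_lt_one hH
    exact_mod_cast h0
  have hHne : (H:ℝ) ≠ 0 := ne_of_gt hHpos
  have hRne : Rmax ≠ 0 := ne_of_gt hRmax
  have hhr : (1:ℝ) ≤ (h:ℝ) := by exact_mod_cast h1h
  have hhHr : (h:ℝ) ≤ (H:ℝ) := by exact_mod_cast hhH
  set ε1 : ℝ := ε * β / (140 * (H:ℝ) * Rmax) with hε1def
  set ε2 : ℝ := ε * β / (140 * (H:ℝ)^2 * Rmax^2) with hε2def
  have hε1pos : 0 < ε1 := by rw [hε1def]; positivity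
  have hε2pos : 0 < ε2 := by rw [hε2def]; positivity
  obtain ⟨M', hM'⟩ : ∃ x : ℝ, x = ((H:ℝ) - h) * Rmax := ⟨_, rfl⟩
  obtain ⟨Mb, hMb⟩ : ∃ x : ℝ, x = ((H:ℝ) - h + 1) * Rmax := ⟨_, rfl⟩
  obtain ⟨w, hw⟩ : ∃ x : ℝ, x = ε2 * M' := ⟨_, rfl⟩
  have hM'0 : 0 ≤ M' := by rw [hM']; exact mul_nonneg (by linarith) hRmax.le
  have hMb0 : 0 ≤ Mb := by rw [hMb]; exact mul_nonneg (by linarith) hRmax.le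
  have hMbM' : Mb = M' + Rmax := by rw [hMb, hM']; ring
  have hM'le : M' ≤ (H:ℝ) * Rmax := by
    rw [hM']; exact mul_le_mul_of_nonneg_right (by linarith) hRmax.le
  have hMble : Mb ≤ (H:ℝ) * Rmax := by
    rw [hMb]; exact mul_le_mul_of_nonneg_right (by linarith) hRmax.le
  have hw0 : 0 ≤ w := by rw [hw]; exact mul_nonneg hε2pos.le hM'0
  have he2HR : ε2 * ((H:ℝ) * Rmax) = ε1 := by
    rw [hε1def, hε2def]; field_simp
  have hwe : w ≤ ε1 := by
    rw [hw, ← he2HR]; exact mul_le_mul_of_nonneg_left hM'le hε2pos.le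
  have tri3 : ∀ x y z : ℝ, |x - y - z| ≤ |x| + |y| + |z| := by
    intro x y z
    have h1 := abs_sub (x - y) z
    have h2 := abs_sub x y
    linarith
  have hnext : ∀ f' : ℕ → S → A → ℝ, InClass Fc f' → ∀ x a, |f' (h+1) x a| ≤ M' := by
    intro f' hf' x a
    rcases eq_or_lt_of_le hhH with hEq | hlt
    · have h1 : h + 1 = H + 1 := by omega
      have hz : f' (h+1) = fun _ _ => (0:ℝ) := by
        rw [h1]
        have hm := hf' (H+1)
        rw [hFc.2] at hm
        exact hm
      rw [hz]
      have hm0 : M' = 0 := by rw [hM', hEq]; ring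
      simp [hm0]
    · have hmem : h + 1 ∈ Finset.Icc 1 H := Finset.mem_Icc.mpr ⟨by omega, hlt⟩
      have hb := hFc.1 (h+1) hmem (f' (h+1)) (hf' (h+1)) x a
      have hcast : ((H:ℝ) - ((h+1 : ℕ) : ℝ) + 1) * Rmax = M' := by
        rw [hM']; push_cast; ring
      rw [hcast] at hb
      exact hb
  have hpol01 : ∀ (π : Pol S A), IsPolicy π → ∀ k x a, 0 ≤ π k x a ∧ π k x a ≤ 1 := by
    intro π hπ k x a
    refine ⟨hπ.1 k x a, ?_⟩
    have h1 : π k x a ≤ ∑ a', π k x a' :=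
      Finset.single_le_sum (fun a' _ => hπ.1 k x a') (Finset.mem_univ a)
    rw [hπ.2 k x] at h1
    exact h1
  have habsπ : ∀ (π : Pol S A), IsPolicy π → ∀ k x, ∑ a, |π k x a| = 1 := by
    intro π hπ k x
    rw [← hπ.2 k x]
    exact Finset.sum_congr rfl fun a _ => abs_of_nonneg (hπ.1 k x a)
  have hexpAb : ∀ (π : Pol S A), IsPolicy π → ∀ (g : S → A → ℝ) (c : ℝ) (k : ℕ),
      (∀ x a, |g x a| ≤ c) → ∀ x, |expA π k g x| ≤ c := by
    intro π hπ g c k hg x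
    have h1 := aux_wabs Finset.univ (fun a => π k x a) (fun a => g x a) c (fun a _ => hg x a)
    rw [expA_def']
    calc |∑ a, π k x a * g x a| ≤ c * ∑ a, |π k x a| := h1
      _ = c := by rw [habsπ π hπ k x, mul_one]
  have hker : ∀ (s : S) (a : A) (u : S → ℝ) (c : ℝ), (∀ x, |u x| ≤ c) →
      |∑ x, P h s a x * u x| ≤ c := by
    intro s a u c hu
    have h1 := aux_wabs Finset.univ (fun x => P h s a x) u c (fun x _ => hu x)
    have hsum : ∑ x, |P h s a x| = 1 := by
      rw [← hP.2 h s a]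
      exact Finset.sum_congr rfl fun x _ => abs_of_nonneg (hP.1 h s a x)
    calc |∑ x, P h s a x * u x| ≤ c * ∑ x, |P h s a x| := h1
      _ = c := by rw [hsum, mul_one]
  have hFb : ∀ (f : ℕ → S → A → ℝ), InClass Fc f → ∀ s a, |f h s a| ≤ Mb := by
    intro f hf s a
    rw [hMb]
    exact hFc.1 h hh (f h) (hf h) s a
  rcases Set.eq_empty_or_nonempty (lossClass P r h Fc PiC) with hLC | hLC
  · refine le_trans (Nat.sInf_le ?_) (Nat.zero_le _)
    exact ⟨∅, Finset.card_empty, by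
      intro g hg
      rw [hLC] at hg
      exact absurd hg (Set.notMem_empty g)⟩
  obtain ⟨g₀, hg₀⟩ := hLC
  obtain ⟨f₀, f₀', π₀, hπ₀PiC, hf₀, hf₀', hg₀eq⟩ := hg₀
  obtain ⟨CF0, hCF0⟩ := aux_grid (S := S) (A := A) H ε1 ((H:ℝ) * Rmax) hε1pos
  have hFbound : ∀ f : ℕ → S → A → ℝ, InClass Fc f → ∀ k ∈ Finset.Icc 1 H, ∀ s a,
      |f k s a| ≤ (H:ℝ) * Rmax := by
    intro f hf k hk s a
    have hb := hFc.1 k hk (f k) (hf k) s a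
    have hk' := Finset.mem_Icc.mp hk
    have hk1 : (1:ℝ) ≤ (k:ℝ) := by exact_mod_cast hk'.1
    have h2 : ((H:ℝ) - k + 1) * Rmax ≤ (H:ℝ) * Rmax :=
      mul_le_mul_of_nonneg_right (by linarith) hRmax.le
    linarith
  have hsetFne : {N : ℕ | ∃ C : Finset (ℕ → S → A → ℝ), C.card = N ∧
      ∀ f : ℕ → S → A → ℝ, InClass Fc f →
        ∃ g ∈ C, ∀ k ∈ Finset.Icc 1 H, ∀ s a, |g k s a - f k s a| ≤ ε1}.Nonempty :=
    ⟨CF0.card, CF0, rfl, fun f hf => hCF0 f (hFbound f hf)⟩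
  obtain ⟨CF, hCFcard, hCF⟩ : ∃ C : Finset (ℕ → S → A → ℝ), C.card = coverF H Fc ε1 ∧
      ∀ f : ℕ → S → A → ℝ, InClass Fc f →
        ∃ g ∈ C, ∀ k ∈ Finset.Icc 1 H, ∀ s a, |g k s a - f k s a| ≤ ε1 :=
    Nat.sInf_mem hsetFne
  have hcardA : (0:ℝ) < (Fintype.card A : ℝ) := by exact_mod_cast Fintype.card_pos
  obtain ⟨CP0, hCP0⟩ := aux_grid (S := S) (A := A) H (ε2 / (Fintype.card A : ℝ)) 1
    (by positivity)
  have hsetPne : {N : ℕ | ∃ C : Finset (Pol S A), C.card = N ∧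
      ∀ π ∈ PiC, ∃ π' ∈ C, ∀ k ∈ Finset.Icc 1 H, ∀ s,
        ∑ a, |π k s a - π' k s a| ≤ ε2}.Nonempty := by
    refine ⟨CP0.card, CP0, rfl, ?_⟩
    intro π hπ
    obtain ⟨π', hπ'C, hπ'⟩ := hCP0 π (by
      intro k hk s a
      have h01 := hpol01 π (hPiC π hπ) k s a
      rw [abs_le]
      exact ⟨by linarith, h01.2⟩)
    refine ⟨π', hπ'C, ?_⟩
    intro k hk s
    calc ∑ a, |π k s a - π' k s a| ≤ ∑ _a : A, ε2 / (Fintype.card A : ℝ) := by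
          refine Finset.sum_le_sum fun a _ => ?_
          rw [abs_sub_comm]
          exact hπ' k hk s a
      _ = ε2 := by
          rw [Finset.sum_const, Finset.card_univ, nsmul_eq_mul]
          field_simp
  obtain ⟨CP, hCPcard, hCP⟩ : ∃ C : Finset (Pol S A), C.card = coverPol H PiC ε2 ∧
      ∀ π ∈ PiC, ∃ π' ∈ C, ∀ k ∈ Finset.Icc 1 H, ∀ s,
        ∑ a, |π k s a - π' k s a| ≤ ε2 :=
    Nat.sInf_mem hsetPne
  have hN1pos : 0 < coverF H Fc ε1 := by
    rw [← hCFcard]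
    obtain ⟨g, hgC, _⟩ := hCF f₀ hf₀
    exact Finset.card_pos.mpr ⟨g, hgC⟩
  have hN2pos : 0 < coverPol H PiC ε2 := by
    rw [← hCPcard]
    obtain ⟨g, hgC, _⟩ := hCP π₀ hπ₀PiC
    exact Finset.card_pos.mpr ⟨g, hgC⟩
  by_cases hcase : ε * β ≤ 140 * (H:ℝ)^2 * Rmax^2
  · -- main case: build the image cover
    obtain ⟨clF, hclF⟩ : ∃ cl : (ℕ → S → A → ℝ) → (ℕ → S → A → ℝ),
        cl = fun (g : ℕ → S → A → ℝ) (k : ℕ) (s : S) (a : A) =>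
          max (-(((H:ℝ) - k + 1) * Rmax)) (min (((H:ℝ) - k + 1) * Rmax) (g k s a)) :=
      ⟨_, rfl⟩
    obtain ⟨clP, hclP⟩ : ∃ cl : Pol S A → Pol S A,
        cl = fun (g : Pol S A) (k : ℕ) (s : S) (a : A) => max 0 (min 1 (g k s a)) :=
      ⟨_, rfl⟩
    have hclFb : ∀ (g : ℕ → S → A → ℝ) k, k ∈ Finset.Icc 1 H → ∀ (x : S) (a : A),
        |clF g k x a| ≤ ((H:ℝ) - k + 1) * Rmax := by
      intro g k hk x a
      have hk' := Finset.mem_Icc.mp hk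
      have hk2 : (k:ℝ) ≤ (H:ℝ) := by exact_mod_cast hk'.2
      have hBpos : 0 ≤ ((H:ℝ) - k + 1) * Rmax := mul_nonneg (by linarith) hRmax.le
      simp only [hclF]
      rw [abs_le]
      exact ⟨le_max_left _ _, max_le (by linarith) (min_le_left _ _)⟩
    have hclFzero : ∀ (g : ℕ → S → A → ℝ) (x : S) (a : A), clF g (H+1) x a = 0 := by
      intro g x a
      simp only [hclF]
      have hc0 : ((H:ℝ) - ((H+1 : ℕ) : ℝ) + 1) * Rmax = 0 := by push_cast; ring
      rw [hc0, neg_zero]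
      exact max_eq_left (min_le_left _ _)
    have hclFclose : ∀ (g : ℕ → S → A → ℝ) k, k ∈ Finset.Icc 1 H →
        ∀ (x : S) (a : A) (v : ℝ),
        |v| ≤ ((H:ℝ) - k + 1) * Rmax → |v - clF g k x a| ≤ |v - g k x a| := by
      intro g k _ x a v hv
      simp only [hclF]
      exact aux_clamp_close' _ _ _ _ (abs_le.mp hv).1 (abs_le.mp hv).2
    have hclP0 : ∀ (g : Pol S A) k x a, 0 ≤ clP g k x a := by
      intro g k x a; simp only [hclP]; exact le_max_left _ _
    have hclPclose : ∀ (p q : Pol S A), IsPolicy p → ∀ k x a,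
        |p k x a - clP q k x a| ≤ |p k x a - q k x a| := by
      intro p q hp k x a
      simp only [hclP]
      exact aux_clamp_close' _ _ _ _ (hpol01 p hp k x a).1 (hpol01 p hp k x a).2
    have he1le : ε1 ≤ (H:ℝ) * Rmax := by
      rw [hε1def, div_le_iff₀ (by positivity : (0:ℝ) < 140 * (H:ℝ) * Rmax)]
      nlinarith [hcase]
    set CG : Finset ((S × A × ℝ × S) → ℝ) :=
      Finset.image (fun p : (ℕ → S → A → ℝ) × (ℕ → S → A → ℝ) × Pol S A =>
        lossFun P r h (clF p.1) (clF p.2.1) (clP p.2.2)) (CF ×ˢ CF ×ˢ CP) with hCG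
    have hmemG : CG.card ∈ {N : ℕ | ∃ C : Finset ((S × A × ℝ × S) → ℝ), C.card = N ∧
        ∀ g ∈ lossClass P r h Fc PiC, ∃ g' ∈ C, ∀ z : S × A × ℝ × S,
          |z.2.2.1| ≤ Rmax → |g z - g' z| ≤ ε * β / 5} := by
      refine ⟨CG, rfl, ?_⟩
      intro g hg
      obtain ⟨f, f', π, hπPiC, hf, hf', rfl⟩ := hg
      obtain ⟨fc, hfcC, hfc⟩ := hCF f hf
      obtain ⟨f'c, hf'cC, hf'c⟩ := hCF f' hf'
      obtain ⟨πc, hπcC, hπc⟩ := hCP π hπPiC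
      have hπpol := hPiC π hπPiC
      refine ⟨lossFun P r h (clF fc) (clF f'c) (clP πc), ?_, ?_⟩
      · rw [hCG]
        exact Finset.mem_image_of_mem
          (fun p : (ℕ → S → A → ℝ) × (ℕ → S → A → ℝ) × Pol S A =>
            lossFun P r h (clF p.1) (clF p.2.1) (clP p.2.2))
          (show (fc, f'c, πc) ∈ CF ×ˢ CF ×ˢ CP from
            Finset.mem_product.mpr ⟨hfcC, Finset.mem_product.mpr ⟨hf'cC, hπcC⟩⟩)
      rintro ⟨s, a, ρ, s'⟩ hρz
      have hρ : |ρ| ≤ Rmax := hρz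
      obtain ⟨E, hE_def⟩ : ∃ E : S → ℝ, E = expA π (h+1) (f' (h+1)) := ⟨_, rfl⟩
      obtain ⟨Ec, hEc_def⟩ : ∃ Ec : S → ℝ, Ec = expA (clP πc) (h+1) (clF f'c (h+1)) :=
        ⟨_, rfl⟩
      obtain ⟨T, hT_def⟩ : ∃ t : ℝ, t = bellman P π r h (f' (h+1)) s a := ⟨_, rfl⟩
      obtain ⟨Tc, hTc_def⟩ :
          ∃ t : ℝ, t = bellman P (clP πc) r h (clF f'c (h+1)) s a := ⟨_, rfl⟩
      have hEb : ∀ x, |E x| ≤ M' := by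
        intro x; rw [hE_def]
        exact hexpAb π hπpol (f' (h+1)) M' (h+1) (hnext f' hf') x
      have hF1 : |f h s a| ≤ Mb := hFb f hf s a
      have hF1c : |clF fc h s a| ≤ Mb := by rw [hMb]; exact hclFb fc h hh s a
      have hF1close : |f h s a - clF fc h s a| ≤ ε1 := by
        refine le_trans (hclFclose fc h hh s a (f h s a) (by rw [← hMb]; exact hF1)) ?_
        rw [abs_sub_comm]
        exact hfc h hh s a
      have hEtilde : (∀ x, |Ec x| ≤ M' + w) ∧ (∀ x, |E x - Ec x| ≤ ε1 + w) := by
        rcases eq_or_lt_of_le hhH with hEq | hlt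
        · have h1 : h + 1 = H + 1 := by omega
          have hz : f' (h+1) = fun _ _ => (0:ℝ) := by
            rw [h1]
            have hm := hf' (H+1)
            rw [hFc.2] at hm
            exact hm
          have hE0 : ∀ x, E x = 0 := by
            intro x
            rw [hE_def, expA_def']
            simp [hz]
          have hEc0 : ∀ x, Ec x = 0 := by
            intro x
            rw [hEc_def, expA_def']
            have hcz : ∀ a : A, clF f'c (h+1) x a = 0 := by
              intro a; rw [h1]; exact hclFzero f'c x a
            simp [hcz]
          constructor
          · intro x
            rw [hEc0 x, abs_zero]
            linarith
          · intro x
            rw [hE0 x, hEc0 x, sub_zero, abs_zero]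
            linarith
        · have hmem1 : h + 1 ∈ Finset.Icc 1 H := Finset.mem_Icc.mpr ⟨by omega, hlt⟩
          have hcast : ((H:ℝ) - ((h+1 : ℕ) : ℝ) + 1) * Rmax = M' := by
            rw [hM']; push_cast; ring
          have hf''cb : ∀ x a, |clF f'c (h+1) x a| ≤ M' := by
            intro x a; rw [← hcast]; exact hclFb f'c (h+1) hmem1 x a
          have hf''close : ∀ x a, |f' (h+1) x a - clF f'c (h+1) x a| ≤ ε1 := by
            intro x a
            refine le_trans (hclFclose f'c (h+1) hmem1 x a (f' (h+1) x a)
              (by rw [hcast]; exact hnext f' hf' x a)) ?_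
            rw [abs_sub_comm]
            exact hf'c (h+1) hmem1 x a
          have hπclose : ∀ x, ∑ a, |π (h+1) x a - clP πc (h+1) x a| ≤ ε2 := by
            intro x
            exact le_trans (Finset.sum_le_sum fun a _ =>
              hclPclose π πc hπpol (h+1) x a) (hπc (h+1) hmem1 x)
          have hclPsum : ∀ x, ∑ a, |clP πc (h+1) x a| ≤ 1 + ε2 := by
            intro x
            have hstep : ∀ a : A, |clP πc (h+1) x a| ≤ π (h+1) x a +
                |π (h+1) x a - clP πc (h+1) x a| := by
              intro a
              rw [abs_of_nonneg (hclP0 πc (h+1) x a)]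
              have hna := neg_abs_le (π (h+1) x a - clP πc (h+1) x a)
              linarith
            calc ∑ a, |clP πc (h+1) x a| ≤
                ∑ a, (π (h+1) x a + |π (h+1) x a - clP πc (h+1) x a|) :=
                  Finset.sum_le_sum fun a _ => hstep a
              _ = (∑ a, π (h+1) x a) + ∑ a, |π (h+1) x a - clP πc (h+1) x a| :=
                  Finset.sum_add_distrib
              _ ≤ 1 + ε2 := by
                  rw [hπpol.2 (h+1) x]
                  exact (add_le_add_iff_left 1).mpr (hπclose x)
          constructor
          · intro x
            rw [hEc_def, expA_def']
            calc |∑ a, clP πc (h+1) x a * clF f'c (h+1) x a| ≤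
                M' * ∑ a, |clP πc (h+1) x a| :=
                  aux_wabs Finset.univ _ _ M' (fun a _ => hf''cb x a)
              _ ≤ M' * (1 + ε2) := mul_le_mul_of_nonneg_left (hclPsum x) hM'0
              _ = M' + w := by rw [hw]; ring
          · intro x
            rw [hE_def, hEc_def, expA_def', expA_def']
            have hsplit : (∑ a, π (h+1) x a * f' (h+1) x a) -
                (∑ a, clP πc (h+1) x a * clF f'c (h+1) x a) =
                (∑ a, π (h+1) x a * (f' (h+1) x a - clF f'c (h+1) x a)) +
                ∑ a, (π (h+1) x a - clP πc (h+1) x a) * clF f'c (h+1) x a := by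
              rw [← Finset.sum_sub_distrib, ← Finset.sum_add_distrib]
              exact Finset.sum_congr rfl fun a _ => by ring
            rw [hsplit]
            have hb1 : |∑ a, π (h+1) x a * (f' (h+1) x a - clF f'c (h+1) x a)| ≤ ε1 := by
              have h1 := aux_wabs Finset.univ (fun a => π (h+1) x a)
                (fun a => f' (h+1) x a - clF f'c (h+1) x a) ε1 (fun a _ => hf''close x a)
              rw [habsπ π hπpol (h+1) x, mul_one] at h1
              exact h1
            have hb2 : |∑ a, (π (h+1) x a - clP πc (h+1) x a) * clF f'c (h+1) x a| ≤ w := by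
              have h1 := aux_wabs Finset.univ (fun a => π (h+1) x a - clP πc (h+1) x a)
                (fun a => clF f'c (h+1) x a) M' (fun a _ => hf''cb x a)
              have h2 : M' * ∑ a, |π (h+1) x a - clP πc (h+1) x a| ≤ M' * ε2 :=
                mul_le_mul_of_nonneg_left (hπclose x) hM'0
              rw [hw]
              calc |∑ a, (π (h+1) x a - clP πc (h+1) x a) * clF f'c (h+1) x a| ≤
                  M' * ∑ a, |π (h+1) x a - clP πc (h+1) x a| := h1
                _ ≤ M' * ε2 := h2
                _ = ε2 * M' := by ring
            calc |(∑ a, π (h+1) x a * (f' (h+1) x a - clF f'c (h+1) x a)) +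
                ∑ a, (π (h+1) x a - clP πc (h+1) x a) * clF f'c (h+1) x a| ≤
                |∑ a, π (h+1) x a * (f' (h+1) x a - clF f'c (h+1) x a)| +
                |∑ a, (π (h+1) x a - clP πc (h+1) x a) * clF f'c (h+1) x a| := abs_add_le _ _
              _ ≤ ε1 + w := add_le_add hb1 hb2
      obtain ⟨hEcb, hEdiff⟩ := hEtilde
      have hTb : |T| ≤ Mb := by
        rw [hT_def, bellman_def']
        simp only [← hE_def]
        calc |r h s a + ∑ x, P h s a x * E x| ≤ |r h s a| + |∑ x, P h s a x * E x| :=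
            abs_add_le _ _
          _ ≤ Rmax + M' := add_le_add (hr h hh s a) (hker s a E M' hEb)
          _ = Mb := by rw [hMbM']; ring
      have hTcb : |Tc| ≤ Mb + w := by
        rw [hTc_def, bellman_def']
        simp only [← hEc_def]
        calc |r h s a + ∑ x, P h s a x * Ec x| ≤ |r h s a| + |∑ x, P h s a x * Ec x| :=
            abs_add_le _ _
          _ ≤ Rmax + (M' + w) := add_le_add (hr h hh s a) (hker s a Ec (M' + w) hEcb)
          _ = Mb + w := by rw [hMbM']; ring
      have hTdiff : |T - Tc| ≤ ε1 + w := by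
        have hTT : T - Tc = ∑ x, P h s a x * (E x - Ec x) := by
          rw [hT_def, hTc_def, bellman_def', bellman_def']
          simp only [← hE_def, ← hEc_def]
          have hms : ∀ x : S, P h s a x * (E x - Ec x) =
              P h s a x * E x - P h s a x * Ec x := fun x => mul_sub _ _ _
          rw [Finset.sum_congr rfl fun x _ => hms x, Finset.sum_sub_distrib]
          ring
        rw [hTT]
        exact hker s a (fun x => E x - Ec x) (ε1 + w) hEdiff
      have hAa : |f h s a - ρ - E s'| ≤ 2 * Mb := by
        have h1 := tri3 (f h s a) ρ (E s')
        have h2 := hEb s'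
        linarith [hF1, hρ, hMbM']
      have hAa' : |clF fc h s a - ρ - Ec s'| ≤ 2 * Mb + w := by
        have h1 := tri3 (clF fc h s a) ρ (Ec s')
        have h2 := hEcb s'
        linarith [hF1c, hρ, hMbM']
      have hBa : |T - ρ - E s'| ≤ 2 * Mb := by
        have h1 := tri3 T ρ (E s')
        have h2 := hEb s'
        linarith [hTb, hρ, hMbM']
      have hBa' : |Tc - ρ - Ec s'| ≤ 2 * Mb + 2 * w := by
        have h1 := tri3 Tc ρ (Ec s')
        have h2 := hEcb s'
        linarith [hTcb, hρ, hMbM']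
      have hBA : |(T - ρ - E s') - (f h s a - ρ - E s')| ≤ 2 * Mb := by
        have heq1 : (T - ρ - E s') - (f h s a - ρ - E s') = T - f h s a := by ring
        rw [heq1]
        have h1 := abs_sub T (f h s a)
        linarith [hTb, hF1]
      have hBA' : |(Tc - ρ - Ec s') - (clF fc h s a - ρ - Ec s')| ≤ 2 * Mb + w := by
        have heq1 : (Tc - ρ - Ec s') - (clF fc h s a - ρ - Ec s') = Tc - clF fc h s a := by
          ring
        rw [heq1]
        have h1 := abs_sub Tc (clF fc h s a)
        linarith [hTcb, hF1c]
      have hfinal := aux_alg Mb w ε1 ((H:ℝ) * Rmax)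
        (f h s a - ρ - E s') (clF fc h s a - ρ - Ec s')
        (T - ρ - E s') (Tc - ρ - Ec s')
        (f h s a - clF fc h s a) (T - Tc) (E s' - Ec s')
        hAa hAa' hBa hBa' hBA hBA' (by ring) (by ring)
        hF1close hTdiff (hEdiff s') hMble hMb0 hw0 hwe he1le
      have h28 : 28 * ((H:ℝ) * Rmax) * ε1 = ε * β / 5 := by
        rw [hε1def]; field_simp; ring
      calc |lossFun P r h f f' π (s, a, ρ, s') -
          lossFun P r h (clF fc) (clF f'c) (clP πc) (s, a, ρ, s')|
          = |(f h s a - ρ - E s')^2 - (T - ρ - E s')^2 -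
            ((clF fc h s a - ρ - Ec s')^2 - (Tc - ρ - Ec s')^2)| := by
            rw [hE_def, hEc_def, hT_def, hTc_def]; rfl
        _ ≤ 28 * ((H:ℝ) * Rmax) * ε1 := hfinal
        _ = ε * β / 5 := h28
    refine le_trans (Nat.sInf_le hmemG) ?_
    calc CG.card ≤ (CF ×ˢ CF ×ˢ CP).card := by
          rw [hCG]; exact Finset.card_image_le
      _ = CF.card * (CF.card * CP.card) := by
          rw [Finset.card_product, Finset.card_product]
      _ = (coverF H Fc ε1)^2 * coverPol H PiC ε2 := by
          rw [hCFcard, hCPcard]; ring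
  · push_neg at hcase
    have hone : (1:ℕ) ∈ {N : ℕ | ∃ C : Finset ((S × A × ℝ × S) → ℝ), C.card = N ∧
        ∀ g ∈ lossClass P r h Fc PiC, ∃ g' ∈ C, ∀ z : S × A × ℝ × S,
          |z.2.2.1| ≤ Rmax → |g z - g' z| ≤ ε * β / 5} := by
      refine ⟨{fun _ => (0:ℝ)}, Finset.card_singleton _, ?_⟩
      intro g hg
      obtain ⟨f, f', π, hπPiC, hf, hf', rfl⟩ := hg
      have hπpol := hPiC π hπPiC
      refine ⟨fun _ => (0:ℝ), Finset.mem_singleton_self _, ?_⟩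
      rintro ⟨s, a, ρ, s'⟩ hρz
      have hρ : |ρ| ≤ Rmax := hρz
      obtain ⟨E, hE_def⟩ : ∃ E : S → ℝ, E = expA π (h+1) (f' (h+1)) := ⟨_, rfl⟩
      obtain ⟨T, hT_def⟩ : ∃ t : ℝ, t = bellman P π r h (f' (h+1)) s a := ⟨_, rfl⟩
      have hEb : ∀ x, |E x| ≤ M' := by
        intro x; rw [hE_def]
        exact hexpAb π hπpol (f' (h+1)) M' (h+1) (hnext f' hf') x
      have hF1 : |f h s a| ≤ Mb := hFb f hf s a
      have hTb : |T| ≤ Mb := by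
        rw [hT_def, bellman_def']
        simp only [← hE_def]
        calc |r h s a + ∑ x, P h s a x * E x| ≤ |r h s a| + |∑ x, P h s a x * E x| :=
            abs_add_le _ _
          _ ≤ Rmax + M' := add_le_add (hr h hh s a) (hker s a E M' hEb)
          _ = Mb := by rw [hMbM']; ring
      have hAa : |f h s a - ρ - E s'| ≤ 2 * ((H:ℝ) * Rmax) := by
        have h1 := tri3 (f h s a) ρ (E s')
        have h2 := hEb s'
        linarith [hF1, hρ, hMbM', hMble]
      have hBa : |T - ρ - E s'| ≤ 2 * ((H:ℝ) * Rmax) := by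
        have h1 := tri3 T ρ (E s')
        have h2 := hEb s'
        linarith [hTb, hρ, hMbM', hMble]
      have heq : lossFun P r h f f' π (s, a, ρ, s') - (fun _ : S × A × ℝ × S => (0:ℝ)) (s, a, ρ, s') =
          (f h s a - ρ - E s')^2 - (T - ρ - E s')^2 := by
        rw [hE_def, hT_def]
        show lossFun P r h f f' π (s, a, ρ, s') - 0 = _
        rw [sub_zero]
        rfl
      rw [heq]
      have hA2 : (f h s a - ρ - E s')^2 ≤ (2 * ((H:ℝ) * Rmax))^2 := by
        have h1 := abs_le.mp hAa
        nlinarith [h1.1, h1.2]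
      have hB2 : (T - ρ - E s')^2 ≤ (2 * ((H:ℝ) * Rmax))^2 := by
        have h1 := abs_le.mp hBa
        nlinarith [h1.1, h1.2]
      rw [abs_le]
      constructor
      · nlinarith [hB2, sq_nonneg (f h s a - ρ - E s'), hcase, sq_nonneg ((H:ℝ) * Rmax)]
      · nlinarith [hA2, sq_nonneg (T - ρ - E s'), hcase, sq_nonneg ((H:ℝ) * Rmax)]
    refine le_trans (Nat.sInf_le hone) ?_
    exact Nat.mul_pos (pow_pos hN1pos 2) hN2pos
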